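/- Let K be a field, f ∈ K[x_1, …, x_n] a homogeneous form of degree d ≥ 2, and L/K a field extension of finite degree e. If f can be written over L as a sum of s products g_i·h_i with g_i, h_i homogeneous of degrees strictly between 0 and d, then f can be written over K as a sum of at most e·s such products. In other words, str_K(f) ≤ e · str_L(f). -/

import Mathlib

open MvPolynomial

section Aux

variable {K L : Type*} [Field K] [Field L] [Algebra K L] {σ : Type*} [DecidableEq σ]

/-- Apply a `K`-linear map `L →ₗ[K] K` to the coefficients of a polynomial. -/
noncomputable def lmapP (φ : L →ₗ[K] K) (p : MvPolynomial σ L) : MvPolynomial σ K :=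
  AddMonoidAlgebra.ofCoeff (Finsupp.mapRange φ φ.map_zero (AddMonoidAlgebra.coeff p))

lemma lmapP_coeff (φ : L →ₗ[K] K) (p : MvPolynomial σ L) (m : σ →₀ ℕ) :
    coeff m (lmapP φ p) = φ (coeff m p) := rfl

lemma lmapP_homog (φ : L →ₗ[K] K) {p : MvPolynomial σ L} {d : ℕ}
    (hp : p.IsHomogeneous d) : (lmapP φ p).IsHomogeneous d := by
  intro m hm
  refine hp fun h0 => hm ?_
  rw [lmapP_coeff, h0, map_zero]

lemma lmapP_sum (φ : L →ₗ[K] K) {ι : Type*} (t : Finset ι) (p : ι → MvPolynomial σ L) :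
    lmapP φ (∑ i ∈ t, p i) = ∑ i ∈ t, lmapP φ (p i) := by
  ext m
  rw [lmapP_coeff]
  simp only [coeff_sum, map_sum, lmapP_coeff]

lemma lmapP_map_mul (φ : L →ₗ[K] K) (q : MvPolynomial σ K) (r : MvPolynomial σ L) :
    lmapP φ (MvPolynomial.map (algebraMap K L) q * r) = q * lmapP φ r := by
  ext m
  rw [lmapP_coeff, coeff_mul, coeff_mul, map_sum]
  refine Finset.sum_congr rfl fun x _ => ?_
  rw [coeff_map, ← Algebra.smul_def, map_smul, smul_eq_mul, lmapP_coeff]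

lemma lmapP_map (φ : L →ₗ[K] K) (hφ : ∀ c : K, φ (algebraMap K L c) = c)
    (q : MvPolynomial σ K) : lmapP φ (MvPolynomial.map (algebraMap K L) q) = q := by
  ext m
  rw [lmapP_coeff, coeff_map, hφ]

/-- Decompose a polynomial over `L` along a `K`-basis of `L`. -/
lemma basis_decomp {e : ℕ} (B : Module.Basis (Fin e) K L) (p : MvPolynomial σ L) :
    p = ∑ j : Fin e, MvPolynomial.map (algebraMap K L) (lmapP (B.coord j) p) * C (B j) := by
  ext m
  rw [coeff_sum]
  have : ∀ j : Fin e,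
      coeff m (MvPolynomial.map (algebraMap K L) (lmapP (B.coord j) p) * C (B j))
        = B.repr (coeff m p) j • B j := by
    intro j
    rw [mul_comm, coeff_C_mul, coeff_map, lmapP_coeff, Algebra.smul_def, mul_comm]
    rfl
  simp only [this]
  exact (B.sum_repr (coeff m p)).symm

end Aux

/-- If a degree-`d` form `f` over `K` has strength at most `s` over a degree-`e` extension
`L`, then `f` has strength at most `e·s` over `K`: `str_K(f) ≤ e · str_L(f)`. -/
theorem stmt17 (K L : Type*) [Field K] [Field L] [Algebra K L]
    (e : ℕ) [FiniteDimensional K L] (he : Module.finrank K L = e)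
    (n d s : ℕ) (hd : 2 ≤ d) (f : MvPolynomial (Fin n) K) (hf : f.IsHomogeneous d)
    (g h : Fin s → MvPolynomial (Fin n) L) (a : Fin s → ℕ)
    (ha : ∀ i, 0 < a i ∧ a i < d)
    (hg : ∀ i, (g i).IsHomogeneous (a i)) (hh : ∀ i, (h i).IsHomogeneous (d - a i))
    (hsum : MvPolynomial.map (algebraMap K L) f = ∑ i, g i * h i) :
    ∃ (g' h' : Fin (e * s) → MvPolynomial (Fin n) K) (b : Fin (e * s) → ℕ),
      (∀ i, 0 < b i ∧ b i < d) ∧ (∀ i, (g' i).IsHomogeneous (b i)) ∧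
      (∀ i, (h' i).IsHomogeneous (d - b i)) ∧ f = ∑ i, g' i * h' i := by
  -- a basis of L over K indexed by `Fin e`
  have B : Module.Basis (Fin e) K L := (Module.finBasis K L).reindex (finCongr he)
  -- a K-linear retraction of `algebraMap K L`
  obtain ⟨π, hπ⟩ := LinearMap.exists_leftInverse_of_injective (Algebra.linearMap K L)
    (LinearMap.ker_eq_bot.mpr (algebraMap K L).injective)
  have hπ' : ∀ c : K, π (algebraMap K L c) = c := fun c => by
    have := congrArg (fun φ => φ c) hπ
    simpa using this
  -- the pieces over K
  set G : Fin e → Fin s → MvPolynomial (Fin n) K :=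
    fun j i => lmapP (B.coord j) (g i) with hG
  set H : Fin e → Fin s → MvPolynomial (Fin n) K :=
    fun j i => lmapP π (C (B j) * h i) with hH
  have key : f = ∑ j : Fin e, ∑ i : Fin s, G j i * H j i := by
    have h1 : f = lmapP π (MvPolynomial.map (algebraMap K L) f) := (lmapP_map π hπ' f).symm
    rw [h1, hsum, lmapP_sum]
    rw [Finset.sum_comm]
    refine Finset.sum_congr rfl fun i _ => ?_
    calc lmapP π (g i * h i)
        = lmapP π ((∑ j : Fin e, MvPolynomial.map (algebraMap K L) (G j i) * C (B j)) * h i) := by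
          rw [← basis_decomp B (g i)]
      _ = lmapP π (∑ j : Fin e, MvPolynomial.map (algebraMap K L) (G j i) * (C (B j) * h i)) := by
          rw [Finset.sum_mul]
          simp_rw [mul_assoc]
      _ = ∑ j : Fin e, G j i * H j i := by
          rw [lmapP_sum]
          exact Finset.sum_congr rfl fun j _ => lmapP_map_mul π (G j i) (C (B j) * h i)
  -- reindex via Fin e × Fin s ≃ Fin (e * s)
  let κ : Fin e × Fin s ≃ Fin (e * s) := finProdFinEquiv
  refine ⟨fun k => G (κ.symm k).1 (κ.symm k).2, fun k => H (κ.symm k).1 (κ.symm k).2,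
    fun k => a (κ.symm k).2, fun k => ha _, fun k => ?_, fun k => ?_, ?_⟩
  · exact lmapP_homog _ (hg _)
  · refine lmapP_homog _ ?_
    have := (isHomogeneous_C (Fin n) (B (κ.symm k).1)).mul (hh (κ.symm k).2)
    simpa using this
  · rw [key]
    rw [← Fintype.sum_equiv κ
      (fun p => G p.1 p.2 * H p.1 p.2)
      (fun k => G (κ.symm k).1 (κ.symm k).2 * H (κ.symm k).1 (κ.symm k).2)
      (fun p => by simp)]
    rw [Fintype.sum_prod_type]
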